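/- (Unique reaching definition dominates) In a program where a fresh definition of v is placed at each node of P ∪ DF⁺(P) (with a definition at the entry node), the unique definition of each SSA version v_i of v dominates every program point in the live range of v_i. -/
import Mathlib


/-- A path in a directed graph `E` from `a` to `b`. -/
def IsPath {V : Type*} (E : V → V → Prop) (l : List V) (a b : V) : Prop :=
  l.head? = some a ∧ l.getLast? = some b ∧ l.Chain' E

/-- Dominance w.r.t. the entry node. -/
def Dom {V : Type*} (E : V → V → Prop) (entry n n' : V) : Prop :=
  ∀ l, IsPath E l entry n' → n ∈ l

/-- The dominance frontier of a node. -/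
def DF {V : Type*} (E : V → V → Prop) (entry n : V) : Set V :=
  {n' | (∃ q, E q n' ∧ Dom E entry n q) ∧ ¬(Dom E entry n n' ∧ n ≠ n')}

/-- The iterated dominance frontier `DF⁺(P)` of a set of nodes. -/
def DFplusSet {V : Type*} (E : V → V → Prop) (entry : V) (P : Set V) : Set V :=
  ⋂₀ {S | (⋃ n ∈ P, DF E entry n) ⊆ S ∧ ∀ z ∈ S, DF E entry z ⊆ S}

lemma dom_self {V : Type*} (E : V → V → Prop) (entry d : V) : Dom E entry d d := by
  intro l hl
  exact List.mem_of_mem_getLast? hl.2.1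

lemma df_closed {V : Type*} (E : V → V → Prop) (entry : V) (P : Set V)
    (z : V) (hz : z ∈ P ∪ DFplusSet E entry P) :
    DF E entry z ⊆ P ∪ DFplusSet E entry P := by
  intro y hy
  right
  intro S hS
  rcases hz with hz | hz
  · exact hS.1 (Set.mem_biUnion hz hy)
  · exact hS.2 z (hz S hS) hy

lemma dom_step {V : Type*} (E : V → V → Prop) (entry : V) (P : Set V)
    (d x y : V) (hd : d ∈ P ∪ DFplusSet E entry P)
    (hx : Dom E entry d x) (hE : E x y)
    (hy : y ∉ P ∪ DFplusSet E entry P) : Dom E entry d y := by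
  by_contra h
  exact hy (df_closed E entry P d hd ⟨⟨x, hE, hx⟩, fun hc => h hc.1⟩)

lemma aux {V : Type*} (E : V → V → Prop) (entry : V) (P : Set V)
    (d : V) (hd : d ∈ P ∪ DFplusSet E entry P) :
    ∀ (l : List V) (a p : V), l.head? = some a → l.getLast? = some p → l.Chain' E →
      (∀ x ∈ l.drop 1, x ∉ P ∪ DFplusSet E entry P) →
      Dom E entry d a → Dom E entry d p := by
  intro l
  induction l with
  | nil => intro a p h; simp at h
  | cons x t ih =>
    intro a p hh hlast hchain hcl ha
    simp at hh; subst hh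
    cases t with
    | nil =>
      simp at hlast; subst hlast; exact ha
    | cons y t' =>
      have hE : E x y := (List.isChain_cons_cons.mp hchain).1
      have hy : y ∉ P ∪ DFplusSet E entry P := hcl y (by simp)
      have hdy : Dom E entry d y := dom_step E entry P d x y hd ha hE hy
      refine ih y p rfl ?_ (List.isChain_cons_cons.mp hchain).2 ?_ hdy
      · simpa using hlast
      · intro z hz; simp at hz; exact hcl z (by simp [hz])

/-- Unique reaching definition dominates: if fresh definitions of `v` are
placed at every node of `D = P ∪ DF⁺(P)` (with a definition at the entry node,
`entry ∈ P`), then the definition of each SSA version dominates every program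
point it reaches without intervening redefinition — in particular every point
of its live range. -/
theorem stmt13 {V : Type*} (E : V → V → Prop) (entry : V)
    (P : Set V) (hentry : entry ∈ P)
    (d p : V) (l : List V)
    (hd : d ∈ P ∪ DFplusSet E entry P)
    (hl : IsPath E l d p)
    (hclean : ∀ x ∈ l.drop 1, x ∉ P ∪ DFplusSet E entry P) :
    Dom E entry d p :=
  aux E entry P d hd l d p hl.1 hl.2.1 hl.2.2 hclean (dom_self E entry d)
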